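/- Let d ≥ 1 and let W : ℝ^d → ℝ ∪ {+∞} be measurable, bounded below by a finite constant, and suppose ρ ∈ P(ℝ^d) is a probability measure with ρ(B(0,n)) > 0 for all n large enough. Define the truncated probability measures ρ_n := ρ(B(0,n))^{-1} · χ_{B(0,n)} ρ. Then E(ρ_n) → E(ρ) as n → ∞, where E is the interaction energy. -/

import Mathlib

open MeasureTheory Filter Metric
open scoped ENNReal Topology

/-- `ℝ^d` with the Euclidean structure. -/
abbrev Ed (d : ℕ) : Type := EuclideanSpace ℝ (Fin d)

/-- The positive part of an extended real number, as an element of `ℝ≥0∞`. -/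
noncomputable def EReal.posPart (x : EReal) : ℝ≥0∞ := (x ⊔ 0).abs

/-- The integral of an `EReal`-valued function, defined as the difference (in `EReal`)
of the lower integrals of the positive and the negative parts. -/
noncomputable def eInt {α : Type*} [MeasurableSpace α] (μ : Measure α) (f : α → EReal) :
    EReal :=
  ((∫⁻ x, (f x).posPart ∂μ : ℝ≥0∞) : EReal) - ((∫⁻ x, (-f x).posPart ∂μ : ℝ≥0∞) : EReal)

/-- The interaction energy `E(ρ) = (1/2) ∬ W(x-y) dρ(x) dρ(y)`, with values in `EReal`. -/
noncomputable def energy {d : ℕ} (W : Ed d → EReal) (ρ : Measure (Ed d)) : EReal :=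
  ((1 / 2 : ℝ) : EReal) * eInt (ρ.prod ρ) (fun p => W (p.1 - p.2))

/-- The support of a measure: the set of points all of whose open neighbourhoods have
positive measure. -/
def msupport {α : Type*} [TopologicalSpace α] [MeasurableSpace α] (μ : Measure α) : Set α :=
  {x | ∀ U : Set α, IsOpen U → x ∈ U → 0 < μ U}

/-- `ρ ∈ P_R(ℝ^d)`: the support of `ρ` is contained in the closed ball `B̄(0,R)`. -/
def InBall {d : ℕ} (ρ : Measure (Ed d)) (R : ℝ) : Prop :=
  msupport ρ ⊆ Metric.closedBall (0 : Ed d) R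

/-- `ρ` is a global minimiser of the interaction energy on `P(ℝ^d)`. -/
def IsMinimiser {d : ℕ} (W : Ed d → EReal) (ρ : Measure (Ed d)) : Prop :=
  IsProbabilityMeasure ρ ∧
    ∀ μ : Measure (Ed d), IsProbabilityMeasure μ → energy W ρ ≤ energy W μ

/-- `ρ` is a global minimiser of the interaction energy on `P_R(ℝ^d)`. -/
def IsMinimiserOn {d : ℕ} (W : Ed d → EReal) (ρ : Measure (Ed d)) (R : ℝ) : Prop :=
  IsProbabilityMeasure ρ ∧ InBall ρ R ∧
    ∀ μ : Measure (Ed d), IsProbabilityMeasure μ → InBall μ R → energy W ρ ≤ energy W μ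


lemma measurable_ereal_abs : Measurable EReal.abs := by
  have h : EReal.abs = fun x : EReal =>
      if x ∈ ({⊥, ⊤} : Set EReal) then (⊤ : ℝ≥0∞) else ENNReal.ofReal |x.toReal| := by
    funext x
    induction x <;> simp [EReal.abs_def]
  rw [h]
  refine Measurable.ite ?_ measurable_const measurable_ereal_toReal.abs.ennreal_ofReal
  exact ((Set.finite_singleton _).insert _).measurableSet

lemma measurable_ereal_posPart : Measurable EReal.posPart :=
  measurable_ereal_abs.comp (measurable_id.max measurable_const)

lemma ereal_abs_mono {u v : EReal} (h0 : 0 ≤ u) (huv : u ≤ v) : u.abs ≤ v.abs := by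
  induction v with
  | bot => exact le_of_eq (by rw [le_bot_iff.1 huv])
  | top => simp
  | coe v =>
    induction u with
    | bot => exact absurd h0 (by simp)
    | top => simp at huv
    | coe u =>
      rw [EReal.abs_def, EReal.abs_def]
      have hu : (0:ℝ) ≤ u := by exact_mod_cast h0
      have huv' : u ≤ v := by exact_mod_cast huv
      exact ENNReal.ofReal_le_ofReal (abs_le_abs huv' (by linarith))

lemma ereal_posPart_mono : Monotone EReal.posPart := by
  intro x y h
  exact ereal_abs_mono le_sup_right (sup_le_sup_right h _)

lemma ereal_posPart_coe (r : ℝ) : EReal.posPart (r : EReal) = ENNReal.ofReal r := by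
  unfold EReal.posPart
  rcases le_total r 0 with h | h
  · rw [sup_eq_right.2 (by exact_mod_cast h)]
    simp [ENNReal.ofReal_of_nonpos h, EReal.abs_def]
  · rw [sup_eq_left.2 (by exact_mod_cast h), EReal.abs_def, abs_of_nonneg h]

lemma smul_prod_smul' {α β : Type*} [MeasurableSpace α] [MeasurableSpace β]
    (μ : Measure α) (ν : Measure β) [SFinite μ] [SFinite ν] (c : ℝ≥0∞) (hc : c ≠ ⊤) :
    (c • μ).prod (c • ν) = (c * c) • (μ.prod ν) := by
  ext s hs
  rw [Measure.smul_apply, smul_eq_mul, Measure.prod_apply hs, Measure.prod_apply hs]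
  simp only [Measure.smul_apply, smul_eq_mul]
  rw [lintegral_smul_measure, lintegral_const_mul' _ _ hc, mul_assoc, smul_eq_mul]

/-- **Lemma (energies of truncations converge).** If `W` is measurable and bounded below by
a finite constant and `ρ` is a probability measure with `ρ(B(0,n)) > 0` for all large `n`,
then the energies of the truncated (renormalised) measures
`ρ_n = ρ(B(0,n))⁻¹ · χ_{B(0,n)} ρ` converge to the energy of `ρ`. -/
theorem energy_truncation_tendsto
    {d : ℕ} (hd : 1 ≤ d) (W : Ed d → EReal) (hWmeas : Measurable W)
    (c : ℝ) (hbound : ∀ x, (c : EReal) ≤ W x)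
    (ρ : Measure (Ed d)) (hρ : IsProbabilityMeasure ρ)
    (hpos : ∀ᶠ n : ℕ in atTop, 0 < ρ (Metric.ball (0 : Ed d) (n : ℝ))) :
    Tendsto
      (fun n : ℕ => energy W
        ((ρ (Metric.ball (0 : Ed d) (n : ℝ)))⁻¹ •
          ρ.restrict (Metric.ball (0 : Ed d) (n : ℝ))))
      atTop (nhds (energy W ρ)) := by
  classical
  haveI := hρ
  set B : ℕ → Set (Ed d) := fun n => Metric.ball (0 : Ed d) (n : ℝ) with hB
  set a : ℕ → ℝ≥0∞ := fun n => ρ (B n) with ha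
  set f : Ed d × Ed d → EReal := fun p => W (p.1 - p.2) with hf
  have hfmeas : Measurable f := hWmeas.comp (measurable_fst.sub measurable_snd)
  set gp : Ed d × Ed d → ℝ≥0∞ := fun p => (f p).posPart with hgp
  set gm : Ed d × Ed d → ℝ≥0∞ := fun p => (-f p).posPart with hgm
  have hgpmeas : Measurable gp := measurable_ereal_posPart.comp hfmeas
  have hgmmeas : Measurable gm := measurable_ereal_posPart.comp hfmeas.neg
  set S : ℕ → Set (Ed d × Ed d) := fun n => (B n) ×ˢ (B n) with hS
  have hBmono : Monotone B := fun p q h => Metric.ball_subset_ball (by exact_mod_cast h)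
  have hSmono : Monotone S := fun p q h => Set.prod_mono (hBmono h) (hBmono h)
  have hBmeas : ∀ n, MeasurableSet (B n) := fun n => measurableSet_ball
  have hSmeas : ∀ n, MeasurableSet (S n) := fun n => (hBmeas n).prod (hBmeas n)
  set π := ρ.prod ρ with hπ
  set P : ℝ≥0∞ := ∫⁻ p, gp p ∂π with hP
  set N : ℝ≥0∞ := ∫⁻ p, gm p ∂π with hN
  set Pn : ℕ → ℝ≥0∞ := fun n => ∫⁻ p in S n, gp p ∂π with hPn
  set Nn : ℕ → ℝ≥0∞ := fun n => ∫⁻ p in S n, gm p ∂π with hNn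
  have hNtop : N ≠ ⊤ := by
    have hle : ∀ p, gm p ≤ ENNReal.ofReal (-c) := by
      intro p
      have h1 : -f p ≤ ((-c : ℝ) : EReal) := by
        rw [EReal.coe_neg]
        exact EReal.neg_le_neg_iff.2 (hbound _)
      calc gm p ≤ EReal.posPart ((-c : ℝ) : EReal) := ereal_posPart_mono h1
        _ = ENNReal.ofReal (-c) := ereal_posPart_coe _
    have hle2 : N ≤ ENNReal.ofReal (-c) := by
      calc N ≤ ∫⁻ _, ENNReal.ofReal (-c) ∂π := lintegral_mono hle
        _ = ENNReal.ofReal (-c) := by simp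
    exact ne_top_of_le_ne_top ENNReal.ofReal_ne_top hle2
  have key : ∀ g : Ed d × Ed d → ℝ≥0∞, Measurable g →
      Tendsto (fun n => ∫⁻ p in S n, g p ∂π) atTop (𝓝 (∫⁻ p, g p ∂π)) := by
    intro g hg
    have heq : ∀ n, ∫⁻ p in S n, g p ∂π = ∫⁻ p, (S n).indicator g p ∂π := fun n =>
      (lintegral_indicator (hSmeas n) g).symm
    simp_rw [heq]
    refine lintegral_tendsto_of_tendsto_of_monotone
      (fun n => (hg.indicator (hSmeas n)).aemeasurable) ?_ ?_
    · exact Eventually.of_forall fun x p q hpq =>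
        Set.indicator_le_indicator_of_subset (hSmono hpq) (fun _ => zero_le) x
    · refine Eventually.of_forall fun x => ?_
      obtain ⟨n₀, hn₀⟩ := exists_nat_gt (max ‖x.1‖ ‖x.2‖)
      refine tendsto_const_nhds.congr' ?_
      filter_upwards [eventually_ge_atTop n₀] with n hn
      have hn' : (n₀ : ℝ) ≤ (n : ℝ) := by exact_mod_cast hn
      have hx : x ∈ S n := by
        refine Set.mem_prod.2 ⟨?_, ?_⟩ <;> rw [mem_ball_zero_iff]
        · exact lt_of_le_of_lt (le_max_left _ _) (lt_of_lt_of_le hn₀ hn')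
        · exact lt_of_le_of_lt (le_max_right _ _) (lt_of_lt_of_le hn₀ hn')
      exact (Set.indicator_of_mem hx g).symm
  have hatend : Tendsto a atTop (𝓝 1) := by
    have huniv : ⋃ n, B n = Set.univ := by
      ext x
      simp only [Set.mem_iUnion, Set.mem_univ, iff_true]
      obtain ⟨n, hn⟩ := exists_nat_gt ‖x‖
      exact ⟨n, by rwa [mem_ball_zero_iff]⟩
    have h := tendsto_measure_iUnion_atTop (μ := ρ) hBmono
    rw [huniv, measure_univ] at h
    exact h
  set m : ℕ → ℝ≥0∞ := fun n => (a n)⁻¹ * (a n)⁻¹ with hm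
  have hmtend : Tendsto m atTop (𝓝 1) := by
    have hinv : Tendsto (fun n => (a n)⁻¹) atTop (𝓝 1) := by
      simpa using ENNReal.tendsto_inv_iff.2 hatend
    simpa using ENNReal.Tendsto.mul hinv (Or.inl one_ne_zero) hinv (Or.inr ENNReal.one_ne_top)
  have hPmt : Tendsto (fun n => m n * Pn n) atTop (𝓝 P) := by
    simpa using ENNReal.Tendsto.mul hmtend (Or.inl one_ne_zero) (key gp hgpmeas)
      (Or.inr ENNReal.one_ne_top)
  have hNmt : Tendsto (fun n => m n * Nn n) atTop (𝓝 N) := by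
    simpa using ENNReal.Tendsto.mul hmtend (Or.inl one_ne_zero) (key gm hgmmeas)
      (Or.inr ENNReal.one_ne_top)
  have heq : (fun n : ℕ => energy W ((a n)⁻¹ • ρ.restrict (B n))) =ᶠ[atTop]
      (fun n : ℕ => ((1/2 : ℝ) : EReal) *
        (((m n * Pn n : ℝ≥0∞) : EReal) - ((m n * Nn n : ℝ≥0∞) : EReal))) := by
    filter_upwards [hpos] with n hn
    have ha0 : a n ≠ 0 := hn.ne'
    have hainv : (a n)⁻¹ ≠ ⊤ := by
      simp [ENNReal.inv_ne_top, ha0]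
    have hprod : ((a n)⁻¹ • ρ.restrict (B n)).prod ((a n)⁻¹ • ρ.restrict (B n))
        = m n • (π.restrict (S n)) := by
      rw [smul_prod_smul' _ _ _ hainv, Measure.prod_restrict]
    rw [energy, hprod, eInt, lintegral_smul_measure, lintegral_smul_measure, smul_eq_mul, smul_eq_mul]
  have h1 : Tendsto (fun n => ((m n * Pn n : ℝ≥0∞) : EReal)) atTop (𝓝 (P : EReal)) :=
    EReal.tendsto_coe_ennreal.2 hPmt
  have h2 : Tendsto (fun n => (-((m n * Nn n : ℝ≥0∞) : EReal))) atTop (𝓝 (-(N : EReal))) :=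
    (EReal.tendsto_coe_ennreal.2 hNmt).neg
  have hsub : Tendsto
      (fun n => ((m n * Pn n : ℝ≥0∞) : EReal) - ((m n * Nn n : ℝ≥0∞) : EReal))
      atTop (𝓝 ((P : EReal) - (N : EReal))) := by
    simp_rw [sub_eq_add_neg]
    exact (EReal.continuousAt_add
      (Or.inr (by simp [EReal.neg_eq_bot_iff, EReal.coe_ennreal_eq_top_iff, hNtop]))
      (Or.inl (EReal.coe_ennreal_ne_bot _))).tendsto.comp (h1.prodMk_nhds h2)
  have hT : Tendsto
      (fun n => ((1/2 : ℝ) : EReal) *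
        (((m n * Pn n : ℝ≥0∞) : EReal) - ((m n * Nn n : ℝ≥0∞) : EReal)))
      atTop (𝓝 (((1/2 : ℝ) : EReal) * ((P : EReal) - (N : EReal)))) :=
    (EReal.continuousAt_mul (p := (((1/2 : ℝ) : EReal), (P : EReal) - (N : EReal)))
      (Or.inl (by norm_num)) (Or.inl (by norm_num)) (Or.inl (EReal.coe_ne_bot _))
      (Or.inl (EReal.coe_ne_top _))).tendsto.comp (tendsto_const_nhds.prodMk_nhds hsub)
  have hEρ : energy W ρ = ((1/2 : ℝ) : EReal) * ((P : EReal) - (N : EReal)) := rfl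
  rw [hEρ]
  exact Tendsto.congr' heq.symm hT
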